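/- Let M be a topological space and φ : M × ℝ → M a flow on M. Let W ⊂ M be an open set with nonempty boundary such that every egress point of W is a strict egress point (W⁻ = W⁻⁻). Suppose Γ ⊂ W ∪ W⁻ is a set such that Γ ∩ W⁻ is a retract of W⁻ but Γ ∩ W⁻ is not a retract of Γ. Then there exists a point x ∈ Γ such that σ(x) = ∞, i.e., the forward half-trajectory {φ(x,t) : t ∈ [0,τ)} is contained in W for every τ ≥ 0. -/
import Mathlib


open scoped ENNReal

/-- The set of egress points of an open set `W` with respect to the flow `φ`:
boundary points `x` such that `φ x t ∈ W` for all `t` in some interval `(-ε, 0)`. -/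
def flowEgress {M : Type*} [TopologicalSpace M] (φ : M → ℝ → M) (W : Set M) : Set M :=
  {x ∈ frontier W | ∃ ε > (0 : ℝ), ∀ t ∈ Set.Ioo (-ε) (0 : ℝ), φ x t ∈ W}

/-- The set of strict egress points of `W` with respect to the flow `φ`:
egress points `x` such that `φ x t ∉ W ∪ ∂W` for all `t` in some interval `(0, ε)`. -/
def flowStrictEgress {M : Type*} [TopologicalSpace M] (φ : M → ℝ → M) (W : Set M) : Set M :=
  {x ∈ flowEgress φ W | ∃ ε > (0 : ℝ), ∀ t ∈ Set.Ioo (0 : ℝ) ε, φ x t ∉ W ∪ frontier W}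

/-- The egress time `σ(x) = sup {τ ≥ 0 : φ x t ∈ W for all t ∈ [0, τ)}`, as an
extended nonnegative real (`⊤` meaning the half-trajectory never leaves `W`).
For `x ∈ ∂W` this supremum is `0`. -/
noncomputable def flowEgressTime {M : Type*} [TopologicalSpace M] (φ : M → ℝ → M)
    (W : Set M) (x : M) : ℝ≥0∞ :=
  sSup {τ : ℝ≥0∞ | ∀ t : ℝ, 0 ≤ t → ENNReal.ofReal t < τ → φ x t ∈ W}

/-- `A` is a retract of `B`: there is a continuous map `r : B → X` with values in `A`
fixing every point of `A ∩ B`. -/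
def IsRetractOf {X : Type*} [TopologicalSpace X] (A B : Set X) : Prop :=
  ∃ r : B → X, Continuous r ∧ (∀ b : B, r b ∈ A) ∧ ∀ b : B, (b : X) ∈ A → r b = b

/-- The Ważewski theorem for flows: if `W⁻ = W⁻⁻` and `Γ ⊆ W ∪ W⁻` is such that
`Γ ∩ W⁻` is a retract of `W⁻` but not a retract of `Γ`, then some point of `Γ`
has infinite egress time, i.e. its forward half-trajectory stays in `W` forever. -/
theorem wazewski_theorem_for_flows
    {M : Type*} [TopologicalSpace M] (φ : M → ℝ → M)
    (hφcont : Continuous fun p : M × ℝ => φ p.1 p.2)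
    (hφ0 : ∀ x, φ x 0 = x)
    (hφadd : ∀ x t s, φ x (t + s) = φ (φ x t) s)
    (W : Set M) (hWopen : IsOpen W) (hWbd : (frontier W).Nonempty)
    (hWeq : flowEgress φ W = flowStrictEgress φ W)
    (Γ : Set M) (hΓ : Γ ⊆ W ∪ flowEgress φ W)
    (hretr : IsRetractOf (Γ ∩ flowEgress φ W) (flowEgress φ W))
    (hnretr : ¬ IsRetractOf (Γ ∩ flowEgress φ W) Γ) :
    ∃ x ∈ Γ, flowEgressTime φ W x = ⊤ ∧ ∀ t : ℝ, 0 ≤ t → φ x t ∈ W := by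
  classical
  by_contra hcon
  push_neg at hcon
  -- Every point of Γ eventually leaves W.
  have key : ∀ x ∈ Γ, ∃ t, 0 ≤ t ∧ φ x t ∉ W := by
    intro x hx
    by_contra h
    push_neg at h
    have htop : flowEgressTime φ W x = ⊤ := by
      refine le_antisymm le_top (le_sSup ?_)
      intro t ht _
      exact h t ht
    obtain ⟨t, ht, htW⟩ := hcon x hx htop
    exact htW (h t ht)
  set S : M → Set ℝ := fun x => {t : ℝ | 0 ≤ t ∧ φ x t ∉ W} with hSdef
  set T : M → ℝ := fun x => sInf (S x) with hTdef
  have hflowx : ∀ x : M, Continuous (φ x) := fun x => hφcont.comp (Continuous.prodMk_right x)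
  have hSclosed : ∀ x, IsClosed (S x) := by
    intro x
    have : S x = Set.Ici (0:ℝ) ∩ (φ x) ⁻¹' Wᶜ := rfl
    rw [this]
    exact isClosed_Ici.inter (hWopen.isClosed_compl.preimage (hflowx x))
  have hSbdd : ∀ x, BddBelow (S x) := fun x => ⟨0, fun t ht => ht.1⟩
  have hT0 : ∀ x, 0 ≤ T x := by
    intro x
    by_cases hne : (S x).Nonempty
    · exact le_csInf hne fun t ht => ht.1
    · simp [hTdef, Set.not_nonempty_iff_eq_empty.mp hne, Real.sInf_empty]
  have hTmem : ∀ x, (S x).Nonempty → T x ∈ S x :=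
    fun x hne => (hSclosed x).csInf_mem hne (hSbdd x)
  have hTin : ∀ x, ∀ t, 0 ≤ t → t < T x → φ x t ∈ W := by
    intro x t ht htT
    by_contra hW
    exact absurd (csInf_le (hSbdd x) ⟨ht, hW⟩) (not_le.mpr htT)
  have hfrW : ∀ z ∈ frontier W, z ∉ W := by
    intro z hz
    rw [frontier, hWopen.interior_eq] at hz
    exact hz.2
  have hTeg : ∀ x ∈ flowEgress φ W, T x = 0 := by
    intro x hx
    have hxW : x ∉ W := hfrW x hx.1
    have h0 : (0:ℝ) ∈ S x := ⟨le_refl 0, by rw [hφ0]; exact hxW⟩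
    exact le_antisymm (csInf_le (hSbdd x) h0) (hT0 x)
  have hTpos : ∀ x ∈ W, (S x).Nonempty → 0 < T x := by
    intro x hx hne
    rcases lt_or_eq_of_le (hT0 x) with h | h
    · exact h
    · exfalso
      have hmem := hTmem x hne
      rw [← h] at hmem
      exact hmem.2 (by rw [hφ0]; exact hx)
  have hSne : ∀ x ∈ Γ, (S x).Nonempty := by
    intro x hx
    obtain ⟨t, ht, htW⟩ := key x hx
    exact ⟨t, ht, htW⟩
  -- The exit point is an egress point.
  have hg : ∀ x ∈ Γ, φ x (T x) ∈ flowEgress φ W := by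
    intro x hx
    have hne := hSne x hx
    have hmem := hTmem x hne
    rcases hΓ hx with hxW | hxE
    · have hTp := hTpos x hxW hne
      constructor
      · rw [frontier, hWopen.interior_eq]
        refine ⟨?_, hmem.2⟩
        have htend : Filter.Tendsto (φ x) (nhdsWithin (T x) (Set.Iio (T x)))
            (nhds (φ x (T x))) :=
          ((hflowx x).tendsto (T x)).mono_left nhdsWithin_le_nhds
        refine mem_closure_of_tendsto htend ?_
        filter_upwards [Ioo_mem_nhdsLT_of_mem (⟨hTp, le_refl (T x)⟩ : T x ∈ Set.Ioc 0 (T x))]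
          with t ht
        exact hTin x t ht.1.le ht.2
      · refine ⟨T x, hTp, ?_⟩
        intro s hs
        have heq : φ (φ x (T x)) s = φ x (T x + s) := (hφadd x (T x) s).symm
        rw [heq]
        exact hTin x (T x + s) (by linarith [hs.1]) (by linarith [hs.2])
    · rw [hTeg x hxE, hφ0]
      exact hxE
  -- closure W = W ∪ frontier W
  have hclos : ∀ z, z ∈ closure W → z ∈ W ∪ frontier W := by
    intro z hz
    by_cases h : z ∈ W
    · exact Or.inl h
    · exact Or.inr ⟨hz, by rw [hWopen.interior_eq]; exact h⟩
  -- Continuity of the exit time on Γ.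
  have hTcont : ContinuousOn T Γ := by
    intro x hx
    rw [ContinuousWithinAt, tendsto_order]
    constructor
    · -- lower semicontinuity
      intro a ha
      by_cases hc : a < 0
      · exact Filter.Eventually.of_forall fun x' => lt_of_lt_of_le hc (hT0 x')
      · push_neg at hc
        obtain ⟨c, hac, hcT⟩ := exists_between ha
        have hsub : ({x} : Set M) ×ˢ Set.Icc (0:ℝ) c ⊆
            (fun p : M × ℝ => φ p.1 p.2) ⁻¹' W := by
          rintro ⟨p, t⟩ ⟨hp, ht⟩
          have hp' : p = x := hp
          have ht' : t ∈ Set.Icc (0:ℝ) c := ht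
          show φ p t ∈ W
          rw [hp']
          exact hTin x t ht'.1 (lt_of_le_of_lt ht'.2 hcT)
        obtain ⟨u, v, hu, _, hxu, hcv, huv⟩ :=
          generalized_tube_lemma isCompact_singleton isCompact_Icc
            (hWopen.preimage hφcont) hsub
        have hunhds : u ∈ nhds x := hu.mem_nhds (hxu rfl)
        filter_upwards [nhdsWithin_le_nhds hunhds, self_mem_nhdsWithin] with x' hx'u hx'Γ
        have hle : c ≤ T x' := by
          refine le_csInf (hSne x' hx'Γ) ?_
          intro t ht
          by_contra hct
          push_neg at hct
          exact ht.2 (huv (Set.mk_mem_prod hx'u (hcv ⟨ht.1, hct.le⟩)))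
        exact lt_of_lt_of_le hac hle
    · -- upper semicontinuity
      intro b hb
      have hy : φ x (T x) ∈ flowStrictEgress φ W := hWeq ▸ hg x hx
      obtain ⟨_, ε₀, hε₀, hstr⟩ := hy
      set s : ℝ := min (ε₀ / 2) ((b - T x) / 2) with hsdef
      have hs0 : 0 < s := lt_min (by linarith) (by linarith)
      have hsε : s < ε₀ := lt_of_le_of_lt (min_le_left _ _) (by linarith)
      have hsb : T x + s < b := by
        have := min_le_right (ε₀ / 2) ((b - T x) / 2)
        have : s ≤ (b - T x) / 2 := this
        linarith
      have hout : φ x (T x + s) ∉ closure W := by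
        intro hmem
        have : φ (φ x (T x)) s ∈ W ∪ frontier W := by
          rw [← hφadd]
          exact hclos _ hmem
        exact hstr s ⟨hs0, hsε⟩ this
      have hcont' : Continuous fun x' : M => φ x' (T x + s) :=
        hφcont.comp (continuous_id.prodMk continuous_const)
      have hev : ∀ᶠ x' in nhds x, φ x' (T x + s) ∈ (closure W)ᶜ :=
        hcont'.continuousAt.eventually_mem (isClosed_closure.isOpen_compl.mem_nhds hout)
      refine Filter.Eventually.mono (nhdsWithin_le_nhds hev) ?_
      intro x' hx'
      have hmem : T x + s ∈ S x' :=
        ⟨by linarith [hT0 x], fun hW => hx' (subset_closure hW)⟩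
      exact lt_of_le_of_lt (csInf_le (hSbdd x') hmem) hsb
  -- Build the forbidden retraction.
  obtain ⟨ρ, hρcont, hρmem, hρfix⟩ := hretr
  exfalso
  apply hnretr
  have hgmem : ∀ x : Γ, φ (x : M) (T (x : M)) ∈ flowEgress φ W := fun x => hg x x.2
  refine ⟨fun x => ρ ⟨φ (x : M) (T (x : M)), hgmem x⟩, ?_, ?_, ?_⟩
  · refine hρcont.comp (Continuous.subtype_mk ?_ _)
    have h1 : Continuous fun x : Γ => ((x : M), T (x : M)) :=
      continuous_subtype_val.prodMk (hTcont.restrict)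
    exact hφcont.comp h1
  · intro b
    exact hρmem _
  · intro b hb
    have hTb : T (b : M) = 0 := hTeg _ hb.2
    have heq : (⟨φ (b : M) (T (b : M)), hgmem b⟩ : flowEgress φ W) = ⟨(b : M), hb.2⟩ := by
      apply Subtype.ext
      show φ (b : M) (T (b : M)) = (b : M)
      rw [hTb, hφ0]
    show ρ ⟨φ (b : M) (T (b : M)), hgmem b⟩ = (b : M)
    rw [heq]
    exact hρfix ⟨(b : M), hb.2⟩ hb
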